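/- The unmerge of a grid point is the maximum of its merge fibre: for all a ∈ Grid_G, U_δ^G(a) = max { p ∈ ℝⁿ : M_δ^G(p) = M_δ^G(a) }, and consequently ‖U_δ^G(a) − Grid_G‖_∞ = δ. -/
import Mathlib


open Classical in
/-- One-dimensional merge function with respect to a finite grid. -/
noncomputable def mergeFn {k : ℕ} (G : Fin k → ℝ) (δ : ℝ) (x : ℝ) : ℝ :=
  if h : ∃ i, x ∈ Set.Icc (G i - δ) (G i + δ) then G h.choose else x

/-- Coordinatewise merge function on ℝⁿ. -/
noncomputable def mergeVec {n : ℕ} {k : Fin n → ℕ} (G : ∀ j, Fin (k j) → ℝ) (δ : ℝ)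
    (a : Fin n → ℝ) : Fin n → ℝ :=
  fun j => mergeFn (G j) δ (a j)

open Classical in
/-- The unmerge function `U_δ^G`. -/
noncomputable def unmergeFn {n : ℕ} {k : Fin n → ℕ} (G : ∀ j, Fin (k j) → ℝ) (δ : ℝ)
    (a : Fin n → ℝ) : Fin n → ℝ :=
  fun i => mergeVec G δ a i + if ∃ t, |a i - G i t| ≤ δ then δ else 0

/-- The grid `Grid_G`: the union of the axis-aligned hyperplanes through the grid. -/
def gridSet {n : ℕ} {k : Fin n → ℕ} (G : ∀ j, Fin (k j) → ℝ) : Set (Fin n → ℝ) :=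
  {a | ∃ j t, a j = G j t}

lemma mem_Icc_iff_abs' (δ g x : ℝ) : x ∈ Set.Icc (g - δ) (g + δ) ↔ |x - g| ≤ δ := by
  rw [Set.mem_Icc, abs_sub_le_iff]
  constructor <;> intro h <;> exact ⟨by linarith [h.1, h.2], by linarith [h.1, h.2]⟩

lemma mergeFn_near {k : ℕ} {G : Fin k → ℝ} {c δ : ℝ}
    (hc : ∀ s t, s ≠ t → c ≤ |G s - G t|) (hδ : δ < c / 2)
    {x : ℝ} {i : Fin k} (h : |x - G i| ≤ δ) : mergeFn G δ x = G i := by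
  have hex : ∃ j, x ∈ Set.Icc (G j - δ) (G j + δ) := ⟨i, (mem_Icc_iff_abs' δ _ x).mpr h⟩
  simp only [mergeFn]
  rw [dif_pos hex]
  have h2 : |x - G hex.choose| ≤ δ := (mem_Icc_iff_abs' δ _ x).mp hex.choose_spec
  by_contra hne
  have hne' : hex.choose ≠ i := fun e => hne (by rw [e])
  have hh := hc _ _ hne'
  have h3 : |G hex.choose - G i| ≤ δ + δ := by
    calc |G hex.choose - G i| ≤ |G hex.choose - x| + |x - G i| := abs_sub_le _ _ _
      _ ≤ δ + δ := add_le_add (by rwa [abs_sub_comm]) h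
  linarith

lemma mergeFn_far {k : ℕ} {G : Fin k → ℝ} {δ : ℝ}
    {x : ℝ} (h : ¬ ∃ t, |x - G t| ≤ δ) : mergeFn G δ x = x := by
  simp only [mergeFn]
  rw [dif_neg]
  rintro ⟨t, ht⟩
  exact h ⟨t, (mem_Icc_iff_abs' δ _ x).mp ht⟩

/-- The unmerge of a grid point is the maximum of its merge fibre, and consequently
it lies at sup-norm distance exactly `δ` from `Grid_G`. -/
theorem unmerge_isGreatest {n : ℕ} (hn : 0 < n) {k : Fin n → ℕ}
    (G : ∀ j, Fin (k j) → ℝ)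
    (hG : ∀ j, Function.Injective (G j))
    (c δ : ℝ) (hc : ∀ j s t, s ≠ t → c ≤ |G j s - G j t|) (hδ0 : 0 ≤ δ)
    (hδ : δ < c / 2)
    (a : Fin n → ℝ) (ha : a ∈ gridSet G) :
    IsGreatest {p : Fin n → ℝ | mergeVec G δ p = mergeVec G δ a} (unmergeFn G δ a) ∧
    Metric.infDist (unmergeFn G δ a) (gridSet G) = δ := by
  obtain ⟨j₀, t₀, ha0⟩ := ha
  -- case analysis for each coordinate
  have hU : ∀ i, (∃ t, |a i - G i t| ≤ δ ∧ unmergeFn G δ a i = G i t + δ ∧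
        mergeFn (G i) δ (a i) = G i t) ∨
      ((¬ ∃ t, |a i - G i t| ≤ δ) ∧ unmergeFn G δ a i = a i ∧
        mergeFn (G i) δ (a i) = a i) := by
    intro i
    by_cases hi : ∃ t, |a i - G i t| ≤ δ
    · obtain ⟨t, ht⟩ := hi
      refine Or.inl ⟨t, ht, ?_, mergeFn_near (hc i) hδ ht⟩
      simp only [unmergeFn, mergeVec]
      rw [mergeFn_near (hc i) hδ ht, if_pos ⟨t, ht⟩]
    · refine Or.inr ⟨hi, ?_, mergeFn_far hi⟩
      simp only [unmergeFn, mergeVec]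
      rw [mergeFn_far hi, if_neg hi, add_zero]
  -- fact (C): every coordinate of the unmerge is at distance ≥ δ from every grid value
  have hC : ∀ i t, δ ≤ |unmergeFn G δ a i - G i t| := by
    intro i t
    rcases hU i with ⟨s, hs, hUi, _⟩ | ⟨hi, hUi, _⟩
    · by_cases hts : t = s
      · subst hts
        rw [hUi]
        have : G i t + δ - G i t = δ := by ring
        rw [this, abs_of_nonneg hδ0]
      · have h1 := hc i s t (fun e => hts (e.symm))
        have h2 : |G i s - G i t| ≤ |G i s + δ - G i t| + δ := by
          calc |G i s - G i t| = |(G i s + δ - G i t) + (-δ)| := by ring_nf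
            _ ≤ |G i s + δ - G i t| + |(-δ)| := abs_add_le _ _
            _ = |G i s + δ - G i t| + δ := by rw [abs_neg, abs_of_nonneg hδ0]
        rw [hUi]
        linarith
    · push_neg at hi
      rw [hUi]
      exact (hi t).le
  constructor
  · constructor
    · -- membership: merge of unmerge equals merge of a
      funext i
      simp only [mergeVec]
      rcases hU i with ⟨t, _, hUi, hmi⟩ | ⟨_, hUi, _⟩
      · rw [hUi, hmi]
        exact mergeFn_near (hc i) hδ (by
          have : G i t + δ - G i t = δ := by ring
          rw [this, abs_of_nonneg hδ0])
      · rw [hUi]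
    · -- upper bound
      intro p hp
      intro i
      have hpi : mergeFn (G i) δ (p i) = mergeFn (G i) δ (a i) := congrFun hp i
      rcases hU i with ⟨t, ht, hUi, hmi⟩ | ⟨hi, hUi, hmi⟩
      · rw [hmi] at hpi
        by_cases hp' : ∃ s, |p i - G i s| ≤ δ
        · obtain ⟨s, hs⟩ := hp'
          have h1 : mergeFn (G i) δ (p i) = G i s := mergeFn_near (hc i) hδ hs
          have h2 : G i s = G i t := by rw [← h1, hpi]
          rw [h2] at hs
          have := abs_sub_le_iff.mp hs
          rw [hUi]
          linarith [this.1]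
        · have h1 : p i = G i t := by rw [← mergeFn_far hp', hpi]
          exact absurd ⟨t, by rw [h1]; simpa using hδ0⟩ hp'
      · rw [hmi] at hpi
        by_cases hp' : ∃ s, |p i - G i s| ≤ δ
        · obtain ⟨s, hs⟩ := hp'
          have h1 : mergeFn (G i) δ (p i) = G i s := mergeFn_near (hc i) hδ hs
          have h2 : G i s = a i := by rw [← h1, hpi]
          exact absurd ⟨s, by rw [← h2]; simpa using hδ0⟩ hi
        · have h1 : p i = a i := by rw [← mergeFn_far hp', hpi]
          rw [hUi, h1]
  · -- the infimum distance equals δ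
    have hmem : a ∈ gridSet G := ⟨j₀, t₀, ha0⟩
    have hne : (gridSet G).Nonempty := ⟨a, hmem⟩
    have hUj0 : unmergeFn G δ a j₀ = G j₀ t₀ + δ := by
      have h0 : |a j₀ - G j₀ t₀| ≤ δ := by rw [ha0]; simpa using hδ0
      simp only [unmergeFn, mergeVec]
      rw [mergeFn_near (hc j₀) hδ h0, if_pos ⟨t₀, h0⟩]
    refine le_antisymm ?_ ?_
    · -- ≤ δ : the point obtained by lowering coordinate j₀ to the grid is in gridSet
      set b := Function.update (unmergeFn G δ a) j₀ (G j₀ t₀) with hb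
      have hbmem : b ∈ gridSet G := ⟨j₀, t₀, by simp [hb]⟩
      refine le_trans (Metric.infDist_le_dist_of_mem hbmem) ?_
      rw [dist_pi_le_iff hδ0]
      intro i
      by_cases hij : i = j₀
      · subst hij
        rw [hb, Function.update_self, Real.dist_eq, hUj0]
        have : G i t₀ + δ - G i t₀ = δ := by ring
        rw [this, abs_of_nonneg hδ0]
      · rw [hb, Function.update_of_ne hij]
        simpa using hδ0
    · -- ≥ δ
      by_contra h
      push_neg at h
      rw [Metric.infDist_lt_iff hne] at h
      obtain ⟨y, ⟨j, t, hy⟩, hdy⟩ := h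
      have h1 : dist (unmergeFn G δ a j) (y j) ≤ dist (unmergeFn G δ a) y :=
        dist_le_pi_dist _ _ j
      have h2 : δ ≤ dist (unmergeFn G δ a j) (y j) := by
        rw [Real.dist_eq, hy]
        exact hC j t
      linarith
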